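/- The determinant of the Bernstein–Vandermonde matrix equals the product of its Neville diagonal pivots: det A = Π_{i=1}^{n+1} p_{i,i}, where p_{i,i} = C(n,i-1)(1-x_i)^{n-i+1}·Π_{k<i}(x_i - x_k)/Π_{k=1}^{i-1}(1-x_k), assuming 0 < x_1 < ... < x_{n+1} < 1. -/

import Mathlib

open Finset

lemma BV_pairmul (c : ℕ → ℝ) : ∀ N : ℕ,
    ∏ i ∈ range N, ∏ j ∈ Ico (i+1) N, (c i * c j) = ∏ i ∈ range N, c i ^ (N - 1)
  | 0 => by simp
  | (N+1) => by
    have h1 : ∀ i ∈ range N, ∏ j ∈ Ico (i+1) (N+1), (c i * c j)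
        = (∏ j ∈ Ico (i+1) N, (c i * c j)) * (c i * c N) := fun i hi => by
      rw [prod_Ico_succ_top (by simpa using Nat.succ_le_of_lt (mem_range.mp hi))]
    rw [prod_range_succ, prod_congr rfl h1, prod_mul_distrib, BV_pairmul c N,
      Ico_self, prod_empty, mul_one, prod_mul_distrib, prod_const, card_range,
      ← mul_assoc, ← prod_mul_distrib, prod_range_succ, Nat.add_sub_cancel]
    congr 1
    refine prod_congr rfl fun i hi => ?_
    have : N - 1 + 1 = N := by have := mem_range.mp hi; omega
    rw [← pow_succ, this]

lemma BV_tri (c : ℕ → ℝ) : ∀ N : ℕ,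
    ∏ i ∈ range N, ∏ k ∈ range i, c k = ∏ k ∈ range N, c k ^ (N - 1 - k)
  | 0 => by simp
  | (N+1) => by
    rw [prod_range_succ, BV_tri c N, ← prod_mul_distrib, prod_range_succ,
      Nat.add_sub_cancel, Nat.sub_self, pow_zero, mul_one]
    refine prod_congr rfl fun k hk => ?_
    have hk' : k < N := mem_range.mp hk
    rw [← pow_succ]
    congr 1
    omega

lemma BV_swap (g : ℕ → ℕ → ℝ) : ∀ N : ℕ,
    ∏ i ∈ range N, ∏ j ∈ Ico (i+1) N, g i j = ∏ j ∈ range N, ∏ i ∈ range j, g i j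
  | 0 => by simp
  | (N+1) => by
    have h1 : ∀ i ∈ range N, ∏ j ∈ Ico (i+1) (N+1), g i j
        = (∏ j ∈ Ico (i+1) N, g i j) * g i N := fun i hi => by
      rw [prod_Ico_succ_top (by simpa using Nat.succ_le_of_lt (mem_range.mp hi))]
    rw [prod_range_succ, prod_congr rfl h1, prod_mul_distrib, BV_swap g N,
      Ico_self, prod_empty, mul_one, prod_range_succ]

/-- Closed form of the diagonal pivots p_{i,i} of the Neville elimination of the
Bernstein–Vandermonde matrix. -/
noncomputable def pBV (n : ℕ) (x : ℕ → ℝ) (i : ℕ) : ℝ :=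
  (n.choose (i - 1) : ℝ) * (1 - x i) ^ (n + 1 - i) *
      (∏ k ∈ Finset.Ico 1 i, (x i - x k)) / ∏ k ∈ Finset.Icc 1 (i - 1), (1 - x k)

/-- The determinant of the Bernstein–Vandermonde matrix equals the product of
its Neville diagonal pivots. -/
theorem bernstein_vandermonde_det_eq_prod_pivots (n : ℕ) (x : ℕ → ℝ)
    (hx : ∀ k, 1 ≤ k → k ≤ n + 1 → 0 < x k ∧ x k < 1)
    (hmono : ∀ k l, 1 ≤ k → k < l → l ≤ n + 1 → x k < x l)
    (A : Matrix (Fin (n + 1)) (Fin (n + 1)) ℝ)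
    (hA : ∀ i j, A i j =
      (n.choose j : ℝ) * (1 - x ((i : ℕ) + 1)) ^ (n - (j : ℕ)) * x ((i : ℕ) + 1) ^ (j : ℕ)) :
    A.det = ∏ i ∈ Finset.Icc 1 (n + 1), pBV n x i := by
  set a : ℕ → ℝ := fun i => x (i + 1) with ha
  set c : ℕ → ℝ := fun i => 1 - x (i + 1) with hcdef
  have hc : ∀ i < n + 1, c i ≠ 0 := by
    intro i hi
    have := (hx (i + 1) (by omega) (by omega)).2
    simp only [hcdef]
    intro h
    nlinarith
  -- Step 1: factor the matrix
  set t : Fin (n + 1) → ℝ := fun i => a i / c i with ht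
  have hfact : A = Matrix.of fun i j : Fin (n + 1) =>
      c i ^ n * ((Matrix.of fun i j : Fin (n + 1) =>
        (n.choose (j : ℕ) : ℝ) * Matrix.vandermonde t i j) i j) := by
    ext i j
    have hci : c (i : ℕ) ≠ 0 := hc i i.isLt
    have hcj : c (i : ℕ) ^ (n - (j : ℕ)) * c (i : ℕ) ^ (j : ℕ) = c (i : ℕ) ^ n := by
      rw [← pow_add]
      congr 1
      omega
    simp only [Matrix.of_apply, Matrix.vandermonde_apply, hA, ht, div_pow]
    rw [hcdef] at hcj hci ⊢
    simp only at hcj hci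
    field_simp
    linear_combination ((n.choose (j : ℕ) : ℝ) * x ((i : ℕ) + 1) ^ (j : ℕ)) * hcj
  have hdet : A.det = (∏ i : Fin (n + 1), c (i : ℕ) ^ n) *
      ((∏ j : Fin (n + 1), (n.choose (j : ℕ) : ℝ)) *
        ∏ i : Fin (n + 1), ∏ j ∈ Ioi i, (t j - t i)) := by
    rw [hfact, Matrix.det_mul_column, Matrix.det_mul_row, Matrix.det_vandermonde]
  -- Step 2: convert Fin products to range products
  have hfin : ∀ f : ℕ → ℝ, (∏ i : Fin (n + 1), f (i : ℕ)) = ∏ i ∈ range (n + 1), f i :=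
    fun f => Fin.prod_univ_eq_prod_range f (n + 1)
  have hIoi : ∀ i : Fin (n + 1), (∏ j ∈ Ioi i, (t j - t i)) =
      ∏ k ∈ Ico ((i : ℕ) + 1) (n + 1), (a k / c k - a i / c i) := by
    intro i
    have h1 : Ico ((i : ℕ) + 1) (n + 1) = (Ioi i).map Fin.valEmbedding := by
      rw [Fin.map_valEmbedding_Ioi]
      ext m
      simp only [mem_Ico, mem_Ioc, mem_Ioo]
      omega
    rw [h1, prod_map]
    rfl
  have hpair : (∏ i : Fin (n + 1), ∏ j ∈ Ioi i, (t j - t i)) =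
      ∏ i ∈ range (n + 1), ∏ k ∈ Ico (i + 1) (n + 1), (a k / c k - a i / c i) := by
    calc (∏ i : Fin (n + 1), ∏ j ∈ Ioi i, (t j - t i))
        = ∏ i : Fin (n + 1), ∏ k ∈ Ico ((i : ℕ) + 1) (n + 1), (a k / c k - a i / c i) :=
          prod_congr rfl fun i _ => hIoi i
      _ = _ := hfin (fun i => ∏ k ∈ Ico (i + 1) (n + 1), (a k / c k - a i / c i))
  -- Step 3: simplify the pair product
  have hsub : ∀ i ∈ range (n + 1), ∀ j ∈ Ico (i + 1) (n + 1),
      a j / c j - a i / c i = (a j - a i) / (c i * c j) := by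
    intro i hi j hj
    have hi' := mem_range.mp hi
    have hj' := mem_Ico.mp hj
    have h1 : c i ≠ 0 := hc i hi'
    have h2 : c j ≠ 0 := hc j hj'.2
    field_simp
    simp only [ha, hcdef]
    ring
  have hpair2 : (∏ i ∈ range (n + 1), ∏ k ∈ Ico (i + 1) (n + 1), (a k / c k - a i / c i)) =
      (∏ i ∈ range (n + 1), ∏ k ∈ Ico (i + 1) (n + 1), (a k - a i)) /
        ∏ i ∈ range (n + 1), c i ^ n := by
    have hp := BV_pairmul c (n + 1)
    simp only [Nat.add_sub_cancel] at hp
    rw [← hp, ← prod_div_distrib]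
    refine prod_congr rfl fun i hi => ?_
    rw [← prod_div_distrib]
    exact prod_congr rfl fun j hj => hsub i hi j hj
  -- Step 4: RHS
  have hRHS : (∏ i ∈ Finset.Icc 1 (n + 1), pBV n x i) =
      ∏ i ∈ range (n + 1), ((n.choose i : ℝ) * c i ^ (n - i) *
        (∏ k ∈ range i, (a i - a k)) / ∏ k ∈ range i, c k) := by
    have h0 : Finset.Icc 1 (n + 1) = Finset.Ico 1 (n + 2) := by
      ext m; simp [Nat.lt_succ_iff]
    rw [h0, prod_Ico_eq_prod_range]
    have h2 : n + 2 - 1 = n + 1 := rfl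
    rw [h2]
    refine prod_congr rfl fun i hi => ?_
    have hi' := mem_range.mp hi
    unfold pBV
    have e1 : 1 + i - 1 = i := by omega
    have e2 : n + 1 - (1 + i) = n - i := by omega
    have e3 : 1 + i = i + 1 := Nat.add_comm 1 i
    have e4 : Finset.Icc 1 i = Finset.Ico 1 (i + 1) := by
      ext m; simp [Nat.lt_succ_iff]
    rw [e1, e2, e3, e4, prod_Ico_eq_prod_range, prod_Ico_eq_prod_range]
    simp only [Nat.add_sub_cancel, ha, hcdef]
    simp only [Nat.add_comm 1]
  -- Step 5: assemble
  have hV : ∀ N, (∏ i ∈ range N, ∏ k ∈ Ico (i + 1) N, (a k - a i)) =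
      ∏ i ∈ range N, ∏ k ∈ range i, (a i - a k) := by
    intro N
    rw [BV_swap (fun i j => a j - a i) N]
  have hPc : (∏ i ∈ range (n + 1), c i ^ n) ≠ 0 :=
    prod_ne_zero_iff.mpr fun i hi => pow_ne_zero _ (hc i (mem_range.mp hi))
  have hPw : (∏ k ∈ range (n + 1), c k ^ (n - k)) ≠ 0 :=
    prod_ne_zero_iff.mpr fun i hi => pow_ne_zero _ (hc i (mem_range.mp hi))
  have htri := BV_tri c (n + 1)
  simp only [Nat.add_sub_cancel] at htri
  rw [hdet, hpair, hpair2, hfin (fun i => c i ^ n),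
    hfin (fun j => (n.choose j : ℝ)), hRHS, hV]
  have hRHSside : (∏ i ∈ range (n + 1), ((n.choose i : ℝ) * c i ^ (n - i) *
        (∏ k ∈ range i, (a i - a k)) / ∏ k ∈ range i, c k)) =
      (∏ i ∈ range (n + 1), (n.choose i : ℝ)) *
        ∏ i ∈ range (n + 1), ∏ k ∈ range i, (a i - a k) := by
    rw [prod_div_distrib, htri, prod_mul_distrib, prod_mul_distrib,
      mul_right_comm, mul_div_assoc, div_self hPw, mul_one]
  rw [hRHSside]
  field_simp
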